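/- Let α, β be real numbers with α ≠ 0, β ≠ 0 and |α| + |β| < 1, let L > 0, and let μ₁, μ₂ ∈ (0,1) satisfy μ₂ < min{ 1 − |β| − α² , ((|β| − 1)² − α²)/(1 − |β|) , (α² − β² + |β|)/|β| } and μ₁ < min{ (1 − |β| − μ₂ − α²)/(L α²) , ((|β| − 1)² − α² − μ₂(1 − |β|))/(L(α² − β² + |β|(1 − μ₂))) }. Then the 2×2 real symmetric matrix M(μ₁,μ₂) with entries M₀₀ = (1 + Lμ₁)α² − 1 + |β| + μ₂, M₀₁ = M₁₀ = αβ(1 + Lμ₁), M₁₁ = β² − |β| + Lμ₁β² is negative definite: for every nonzero v ∈ ℝ², v ⬝ᵥ (M(μ₁,μ₂).mulVec v) < 0. -/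
import Mathlib


open Matrix

theorem lyapunov_matrix_neg_def (α β L μ₁ μ₂ : ℝ)
    (hα : α ≠ 0) (hβ : β ≠ 0) (hab : |α| + |β| < 1) (hL : 0 < L)
    (hμ₁mem : μ₁ ∈ Set.Ioo (0 : ℝ) 1) (hμ₂mem : μ₂ ∈ Set.Ioo (0 : ℝ) 1)
    (hμ₂ : μ₂ < min (min (1 - |β| - α ^ 2) (((|β| - 1) ^ 2 - α ^ 2) / (1 - |β|)))
      ((α ^ 2 - β ^ 2 + |β|) / |β|))
    (hμ₁ : μ₁ < min ((1 - |β| - μ₂ - α ^ 2) / (L * α ^ 2))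
      (((|β| - 1) ^ 2 - α ^ 2 - μ₂ * (1 - |β|)) / (L * (α ^ 2 - β ^ 2 + |β| * (1 - μ₂))))) :
    ∀ v : Fin 2 → ℝ, v ≠ 0 →
      v ⬝ᵥ (!![(1 + L * μ₁) * α ^ 2 - 1 + |β| + μ₂, α * β * (1 + L * μ₁);
               α * β * (1 + L * μ₁), β ^ 2 - |β| + L * μ₁ * β ^ 2]).mulVec v < 0 := by
  obtain ⟨hμ₁0, hμ₁1⟩ := hμ₁mem
  obtain ⟨hμ₂0, hμ₂1⟩ := hμ₂mem
  have hb0 : (0:ℝ) < |β| := abs_pos.mpr hβ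
  have ha01 : (0:ℝ) < |α| := abs_pos.mpr hα
  have hb1 : |β| < 1 := by linarith [abs_nonneg α]
  have hα2 : (0:ℝ) < α ^ 2 := by positivity
  have hsb : β ^ 2 = |β| ^ 2 := (sq_abs β).symm
  rw [lt_min_iff, lt_min_iff] at hμ₂
  obtain ⟨⟨h1, h2'⟩, h3'⟩ := hμ₂
  have h2 : μ₂ * (1 - |β|) < (|β| - 1) ^ 2 - α ^ 2 :=
    (lt_div_iff₀ (by linarith)).mp h2'
  have h3 : μ₂ * |β| < α ^ 2 - β ^ 2 + |β| :=
    (lt_div_iff₀ hb0).mp h3'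
  have hD : 0 < α ^ 2 - β ^ 2 + |β| * (1 - μ₂) := by nlinarith
  rw [lt_min_iff] at hμ₁
  obtain ⟨h4', h5'⟩ := hμ₁
  have h4 : μ₁ * (L * α ^ 2) < 1 - |β| - μ₂ - α ^ 2 :=
    (lt_div_iff₀ (by positivity)).mp h4'
  have h5 : μ₁ * (L * (α ^ 2 - β ^ 2 + |β| * (1 - μ₂))) <
      (|β| - 1) ^ 2 - α ^ 2 - μ₂ * (1 - |β|) :=
    (lt_div_iff₀ (by positivity)).mp h5'
  set a := (1 + L * μ₁) * α ^ 2 - 1 + |β| + μ₂ with ha_def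
  set b := α * β * (1 + L * μ₁) with hb_def
  set c := β ^ 2 - |β| + L * μ₁ * β ^ 2 with hc_def
  have ha : a < 0 := by rw [ha_def]; nlinarith
  have hdet : 0 < a * c - b ^ 2 := by
    have hid : a * c - b ^ 2
        = |β| * ((1 - |β| - μ₂) - (1 + L * μ₁) * (α ^ 2 - β ^ 2 + |β| * (1 - μ₂))) := by
      rw [ha_def, hb_def, hc_def]
      linear_combination (-(1 + L * μ₁) * (1 - μ₂)) * hsb
    rw [hid]
    apply mul_pos hb0
    nlinarith [h5, hsb]
  clear_value a b c
  intro v hv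
  have hq : v ⬝ᵥ (!![a, b; b, c]).mulVec v
      = a * v 0 ^ 2 + 2 * b * (v 0 * v 1) + c * v 1 ^ 2 := by
    simp [Matrix.mulVec, dotProduct, Fin.sum_univ_two]
    ring
  rw [hq]
  by_cases h1v : v 1 = 0
  · have h0v : v 0 ≠ 0 := by
      intro h0
      apply hv
      funext i
      fin_cases i <;> simp [h0, h1v]
    have hv0 : 0 < v 0 ^ 2 := by positivity
    rw [h1v]
    have := mul_pos (neg_pos.mpr ha) hv0
    linarith [this]
  · have hv1 : 0 < v 1 ^ 2 := by positivity
    have key : a * (a * v 0 ^ 2 + 2 * b * (v 0 * v 1) + c * v 1 ^ 2)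
        = (a * v 0 + b * v 1) ^ 2 + (a * c - b ^ 2) * v 1 ^ 2 := by ring
    have hpos : 0 < a * (a * v 0 ^ 2 + 2 * b * (v 0 * v 1) + c * v 1 ^ 2) := by
      rw [key]
      have := mul_pos hdet hv1
      linarith [sq_nonneg (a * v 0 + b * v 1)]
    by_contra hcon
    push_neg at hcon
    have := mul_nonneg (le_of_lt (neg_pos.mpr ha)) hcon
    linarith
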